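/- Let G be a graph in H* (defined below) and suppose S ⊆ V(G) induces one of the graphs G_4,…,G_10 (each of which contains an induced C_5 together with additional vertices). If D ⊆ S induces a C_5 with D ⊆ A_1 ∪ … ∪ A_5, then every vertex of S∖D having a neighbour in D lies in A_6, and any two vertices u, v ∈ S∖D with neighbours in D satisfy N(u)∩D = N(v)∩D. -/

import Mathlib

open SimpleGraph

/-- A graph is `k`-vertex-critical if its chromatic number is `k` and deleting
any vertex lowers the chromatic number. -/
def IsKVertexCritical {V : Type*} (G : SimpleGraph V) (k : ℕ) : Prop :=
  G.chromaticNumber = (k : ℕ∞) ∧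
    ∀ v : V, (G.induce {u | u ≠ v}).chromaticNumber < (k : ℕ∞)

/-- The clique number of a graph. -/
noncomputable def cliqueNum' {V : Type*} (G : SimpleGraph V) : ℕ :=
  sSup {n | ∃ s : Finset V, G.IsNClique n s}

/-- `G` has no induced subgraph isomorphic to `H`. -/
def IndFree {W V : Type*} (H : SimpleGraph W) (G : SimpleGraph V) : Prop :=
  ¬ ∃ s : Set V, Nonempty (H ≃g G.induce s)

def CompleteTo {V : Type*} (G : SimpleGraph V) (S T : Set V) : Prop :=
  ∀ s ∈ S, ∀ t ∈ T, G.Adj s t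

def AnticompleteTo {V : Type*} (G : SimpleGraph V) (S T : Set V) : Prop :=
  ∀ s ∈ S, ∀ t ∈ T, ¬ G.Adj s t

/-- `M` is a module of `G`: each outside vertex is complete or anticomplete to `M`. -/
def IsModule {V : Type*} (G : SimpleGraph V) (M : Set V) : Prop :=
  ∀ v ∉ M, (∀ m ∈ M, G.Adj v m) ∨ (∀ m ∈ M, ¬ G.Adj v m)

/-- A non-trivial module: a module `M` with `2 ≤ |M| < |V(G)|`. -/
def IsNontrivialModule {V : Type*} (G : SimpleGraph V) (M : Set V) : Prop :=
  IsModule G M ∧ 2 ≤ M.ncard ∧ M.ncard < Nat.card V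

/-- `G` is an expansion of `H` with parts `Q w`: parts are nonempty, partition `V(G)`,
are completely joined along edges of `H` and anticomplete along non-edges. -/
def IsExpansion {V W : Type*} (G : SimpleGraph V) (H : SimpleGraph W) (Q : W → Set V) : Prop :=
  (∀ w, (Q w).Nonempty) ∧
  (Pairwise fun w w' => Disjoint (Q w) (Q w')) ∧
  (∀ v, ∃ w, v ∈ Q w) ∧
  (∀ w w', H.Adj w w' → CompleteTo G (Q w) (Q w')) ∧
  (∀ w w', w ≠ w' → ¬ H.Adj w w' → AnticompleteTo G (Q w) (Q w'))

/-- The path on four vertices. -/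
def P4 : SimpleGraph (Fin 4) := SimpleGraph.pathGraph 4

/-- The path on five vertices. -/
def P5 : SimpleGraph (Fin 5) := SimpleGraph.pathGraph 5

/-- The gem: a `P₄` (0-1-2-3) plus a dominating vertex 4. -/
def gem : SimpleGraph (Fin 5) :=
  SimpleGraph.fromRel (fun a b =>
    (a, b) ∈ [((0 : Fin 5), (1 : Fin 5)), (1, 2), (2, 3), (4, 0), (4, 1), (4, 2), (4, 3)])

/-- The five-cycle. -/
def cycle5 : SimpleGraph (Fin 5) :=
  SimpleGraph.fromRel (fun a b =>
    (a, b) ∈ [((0 : Fin 5), (1 : Fin 5)), (1, 2), (2, 3), (3, 4), (4, 0)])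

/-- The partition conditions defining the class `H*` of (P₅, gem)-free graphs:
`A₁,…,A₅` are nonempty cliques in a `C₅` pattern, `A₆` is complete to `A₁ ∪ A₃ ∪ A₄`
and anticomplete to `A₂ ∪ A₅`, every component of `G[A₇]` is a clique and a module of
`G`, every vertex of `A₇` has a neighbour in `A₆`, and `A₇` is anticomplete to
`A₁ ∪ ⋯ ∪ A₅`. -/
structure HStarPart {V : Type*} (G : SimpleGraph V)
    (A1 A2 A3 A4 A5 A6 A7 : Set V) : Prop where
  ne1 : A1.Nonempty
  ne2 : A2.Nonempty
  ne3 : A3.Nonempty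
  ne4 : A4.Nonempty
  ne5 : A5.Nonempty
  ne6 : A6.Nonempty
  ne7 : A7.Nonempty
  pdisj : List.Pairwise Disjoint [A1, A2, A3, A4, A5, A6, A7]
  cover : A1 ∪ A2 ∪ A3 ∪ A4 ∪ A5 ∪ A6 ∪ A7 = Set.univ
  cl1 : G.IsClique A1
  cl2 : G.IsClique A2
  cl3 : G.IsClique A3
  cl4 : G.IsClique A4
  cl5 : G.IsClique A5
  c12 : CompleteTo G A1 A2
  c23 : CompleteTo G A2 A3
  c34 : CompleteTo G A3 A4
  c45 : CompleteTo G A4 A5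
  c51 : CompleteTo G A5 A1
  a13 : AnticompleteTo G A1 A3
  a14 : AnticompleteTo G A1 A4
  a24 : AnticompleteTo G A2 A4
  a25 : AnticompleteTo G A2 A5
  a35 : AnticompleteTo G A3 A5
  c61 : CompleteTo G A6 A1
  c63 : CompleteTo G A6 A3
  c64 : CompleteTo G A6 A4
  a62 : AnticompleteTo G A6 A2
  a65 : AnticompleteTo G A6 A5
  a71 : AnticompleteTo G A7 A1
  a72 : AnticompleteTo G A7 A2
  a73 : AnticompleteTo G A7 A3
  a74 : AnticompleteTo G A7 A4
  a75 : AnticompleteTo G A7 A5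
  /-- every component of `G[A₇]` is a clique -/
  comp_clique : ∀ x y : A7, (G.induce A7).Reachable x y → x = y ∨ G.Adj x.1 y.1
  /-- every component of `G[A₇]` is a module of `G` -/
  comp_module : ∀ x y : A7, (G.induce A7).Reachable x y →
    ∀ z : V, (¬ ∃ hz : z ∈ A7, (G.induce A7).Reachable x ⟨z, hz⟩) →
      (G.Adj z x.1 ↔ G.Adj z y.1)
  a7nbr : ∀ x ∈ A7, ∃ y ∈ A6, G.Adj x y

/-- The graph `G₄` of the structure theorem. -/
def graphG4 : SimpleGraph (Fin 7) :=
  SimpleGraph.fromRel (fun a b => (a, b) ∈ [((0 : Fin 7), (1 : Fin 7)), (0, 4), (0, 5), (0, 6),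
    (1, 2), (1, 6), (2, 3), (2, 5), (3, 4), (3, 5), (3, 6)])

/-- The graph `G₅` of the structure theorem. -/
def graphG5 : SimpleGraph (Fin 8) :=
  SimpleGraph.fromRel (fun a b => (a, b) ∈ [((0 : Fin 8), (1 : Fin 8)), (0, 4), (0, 5), (0, 6),
    (0, 7), (1, 2), (1, 6), (2, 3), (2, 5), (2, 7), (3, 4), (3, 5), (3, 6)])

/-- The graph `G₆` of the structure theorem. -/
def graphG6 : SimpleGraph (Fin 8) :=
  SimpleGraph.fromRel (fun a b => (a, b) ∈ [((0 : Fin 8), (1 : Fin 8)), (0, 4), (0, 5), (0, 6),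
    (1, 2), (1, 6), (1, 7), (2, 3), (2, 5), (3, 4), (3, 5), (3, 6), (4, 7), (5, 7)])

/-- The graph `G₇` of the structure theorem. -/
def graphG7 : SimpleGraph (Fin 8) :=
  SimpleGraph.fromRel (fun a b => (a, b) ∈ [((0 : Fin 8), (1 : Fin 8)), (0, 2), (0, 3), (0, 6),
    (1, 2), (1, 4), (1, 7), (2, 5), (3, 4), (3, 5), (3, 7), (4, 5), (4, 6)])

/-- The graph `G₈` of the structure theorem. -/
def graphG8 : SimpleGraph (Fin 8) :=
  SimpleGraph.fromRel (fun a b => (a, b) ∈ [((0 : Fin 8), (1 : Fin 8)), (0, 4), (0, 5), (0, 6),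
    (1, 2), (1, 7), (2, 3), (2, 6), (3, 4), (3, 5), (3, 7), (4, 6), (5, 7), (6, 7)])

/-- The graph `G₉` of the structure theorem. -/
def graphG9 : SimpleGraph (Fin 9) :=
  SimpleGraph.fromRel (fun a b => (a, b) ∈ [((0 : Fin 9), (1 : Fin 9)), (0, 4), (0, 5), (0, 6),
    (0, 8), (1, 2), (1, 7), (2, 3), (2, 6), (3, 4), (3, 5), (3, 7), (3, 8), (4, 6), (5, 7),
    (6, 7)])

/-- The graph `G₁₀` of the structure theorem. -/
def graphG10 : SimpleGraph (Fin 9) :=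
  SimpleGraph.fromRel (fun a b => (a, b) ∈ [((0 : Fin 9), (1 : Fin 9)), (0, 4), (0, 5), (0, 6),
    (1, 2), (1, 7), (1, 8), (2, 3), (2, 6), (2, 8), (3, 4), (3, 5), (3, 7), (4, 6), (4, 8),
    (5, 7), (5, 8), (6, 7)])


/-! ### Auxiliary material for Statement 13 -/

section Statement13Aux

open SimpleGraph

instance : DecidableRel cycle5.Adj := fun a b =>
  decidable_of_iff _ (SimpleGraph.fromRel_adj _ a b).symm
instance : DecidableRel graphG4.Adj := fun a b =>
  decidable_of_iff _ (SimpleGraph.fromRel_adj _ a b).symm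
instance : DecidableRel graphG5.Adj := fun a b =>
  decidable_of_iff _ (SimpleGraph.fromRel_adj _ a b).symm
instance : DecidableRel graphG6.Adj := fun a b =>
  decidable_of_iff _ (SimpleGraph.fromRel_adj _ a b).symm
instance : DecidableRel graphG7.Adj := fun a b =>
  decidable_of_iff _ (SimpleGraph.fromRel_adj _ a b).symm
instance : DecidableRel graphG8.Adj := fun a b =>
  decidable_of_iff _ (SimpleGraph.fromRel_adj _ a b).symm
instance : DecidableRel graphG9.Adj := fun a b =>
  decidable_of_iff _ (SimpleGraph.fromRel_adj _ a b).symm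
instance : DecidableRel graphG10.Adj := fun a b =>
  decidable_of_iff _ (SimpleGraph.fromRel_adj _ a b).symm

set_option synthInstance.maxSize 4000
set_option synthInstance.maxHeartbeats 4000000
set_option maxHeartbeats 4000000

/-- `H` contains no vertex adjacent to exactly three consecutive vertices of an
induced five-cycle (in the precise pattern needed below). -/
abbrev NoFan {n : ℕ} (H : SimpleGraph (Fin n)) : Prop :=
  ∀ w v0, H.Adj w v0 → ∀ v1, H.Adj w v1 → H.Adj v0 v1 →
  ∀ v4, H.Adj w v4 → H.Adj v4 v0 → ¬H.Adj v1 v4 →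
  ∀ v2, H.Adj v1 v2 → ¬H.Adj w v2 → ¬H.Adj v0 v2 → ¬H.Adj v2 v4 →
  ∀ v3, H.Adj v2 v3 → H.Adj v3 v4 → ¬H.Adj w v3 → ¬H.Adj v0 v3 → ¬H.Adj v1 v3 → False

lemma nofanG4 : NoFan graphG4 := by decide
lemma nofanG5 : NoFan graphG5 := by decide
lemma nofanG6 : NoFan graphG6 := by decide
lemma nofanG7 : NoFan graphG7 := by decide
lemma nofanG8 : NoFan graphG8 := by decide
lemma nofanG9 : NoFan graphG9 := by decide
lemma nofanG10 : NoFan graphG10 := by decide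

lemma cyc_adj13 : ∀ k : Fin 5, cycle5.Adj k (k + 1) := by decide
lemma cyc_nadj13 : ∀ k : Fin 5, ¬ cycle5.Adj k (k + 2) := by decide
lemma fin5cases : ∀ m : Fin 5, m = 0 ∨ m = 1 ∨ m = 2 ∨ m = 3 ∨ m = 4 := by decide

/-- The neighbourhood pattern of a rotation. -/
abbrev RotPat (a b c d e i : Fin 5) : Prop :=
  a = i ∧ (b = i + 1 ∨ b = i + 4) ∧ (c = i + 2 ∨ c = i + 3) ∧
    (d = i + 2 ∨ d = i + 3) ∧ (e = i + 1 ∨ e = i + 4)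

lemma sigma_main13 : ∀ a b c d e i : Fin 5,
    (b = a + 1 ∨ b = a + 4) → (c = b + 1 ∨ c = b + 4) → (d = c + 1 ∨ d = c + 4) →
    (e = d + 1 ∨ e = d + 4) → (a = e + 1 ∨ a = e + 4) →
    (c = a + 2 ∨ c = a + 3) → (d = b + 2 ∨ d = b + 3) → (e = c + 2 ∨ e = c + 3) →
    (a = d + 2 ∨ a = d + 3) → (b = e + 2 ∨ b = e + 3) →
    RotPat a b c d e i ∨ RotPat b c d e a i ∨ RotPat c d e a b i ∨
      RotPat d e a b c i ∨ RotPat e a b c d i := by decide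

lemma fan_transport13 {V : Type*} {G : SimpleGraph V} {S : Set V} {n : ℕ}
    {H : SimpleGraph (Fin n)} (hfan : NoFan H) (f : H ≃g G.induce S)
    {w v0 v1 v2 v3 v4 : V} (hw : w ∈ S) (h0 : v0 ∈ S) (h1 : v1 ∈ S) (h2 : v2 ∈ S)
    (h3 : v3 ∈ S) (h4 : v4 ∈ S)
    (a01 : G.Adj v0 v1) (a12 : G.Adj v1 v2) (a23 : G.Adj v2 v3) (a34 : G.Adj v3 v4)
    (a40 : G.Adj v4 v0)
    (n02 : ¬G.Adj v0 v2) (n13 : ¬G.Adj v1 v3) (n24 : ¬G.Adj v2 v4) (n30 : ¬G.Adj v3 v0)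
    (n41 : ¬G.Adj v4 v1)
    (aw0 : G.Adj w v0) (aw1 : G.Adj w v1) (aw4 : G.Adj w v4)
    (nw2 : ¬G.Adj w v2) (nw3 : ¬G.Adj w v3) : False := by
  have key : ∀ {a b : V} (ha : a ∈ S) (hb : b ∈ S),
      H.Adj (f.symm ⟨a, ha⟩) (f.symm ⟨b, hb⟩) ↔ G.Adj a b := by
    intro a b ha hb
    exact f.symm.map_adj_iff
  exact hfan (f.symm ⟨w, hw⟩) (f.symm ⟨v0, h0⟩) ((key hw h0).mpr aw0)
    (f.symm ⟨v1, h1⟩) ((key hw h1).mpr aw1) ((key h0 h1).mpr a01)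
    (f.symm ⟨v4, h4⟩) ((key hw h4).mpr aw4) ((key h4 h0).mpr a40)
    (fun hh => n41 ((key h1 h4).mp hh).symm)
    (f.symm ⟨v2, h2⟩) ((key h1 h2).mpr a12)
    (fun hh => nw2 ((key hw h2).mp hh))
    (fun hh => n02 ((key h0 h2).mp hh))
    (fun hh => n24 ((key h2 h4).mp hh))
    (f.symm ⟨v3, h3⟩) ((key h2 h3).mpr a23) ((key h3 h4).mpr a34)
    (fun hh => nw3 ((key hw h3).mp hh))
    (fun hh => n30 ((key h0 h3).mp hh).symm)
    (fun hh => n13 ((key h1 h3).mp hh))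

lemma inPartContra13 {V : Type*} {G : SimpleGraph V} (A : Fin 5 → Set V)
    (hdisj : ∀ (x : V) (a b : Fin 5), x ∈ A a → x ∈ A b → a = b)
    (hclq : ∀ a : Fin 5, G.IsClique (A a))
    (hcom : ∀ a : Fin 5, CompleteTo G (A a) (A (a + 1)))
    (hant : ∀ a : Fin 5, AnticompleteTo G (A a) (A (a + 2)))
    {n : ℕ} {H : SimpleGraph (Fin n)} (hfan : NoFan H)
    {S : Set V} (f : H ≃g G.induce S) {D : Set V} (hDS : D ⊆ S)
    (g : cycle5 ≃g G.induce D) (hD5 : ∀ x ∈ D, ∃ a, x ∈ A a)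
    {u : V} (huS : u ∈ S) (huD : u ∉ D) {i : Fin 5} (hui : u ∈ A i) : False := by
  have adj_of : ∀ {x y : V} {a b : Fin 5}, x ∈ A a → y ∈ A b → x ≠ y →
      (b = a ∨ b = a + 1 ∨ b = a + 4) → G.Adj x y := by
    rintro x y a b hx hy hxy (rfl | rfl | rfl)
    · exact hclq _ hx hy hxy
    · exact hcom a x hx y hy
    · have h45 : a + 4 + 1 = a := by
        rw [add_assoc, show (4 : Fin 5) + 1 = 0 by decide, add_zero]
      exact (hcom (a + 4) y hy x (by rw [h45]; exact hx)).symm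
  have nadj_of : ∀ {x y : V} {a b : Fin 5}, x ∈ A a → y ∈ A b →
      (b = a + 2 ∨ b = a + 3) → ¬ G.Adj x y := by
    rintro x y a b hx hy (rfl | rfl)
    · exact hant a x hx y hy
    · have h32 : a + 3 + 2 = a := by
        rw [add_assoc, show (3 : Fin 5) + 2 = 0 by decide, add_zero]
      exact fun hadj => hant (a + 3) y hy x (by rw [h32]; exact hx) hadj.symm
  set e : Fin 5 → V := fun k => (g k : V) with he_def
  have he : ∀ k, e k ∈ D := fun k => (g k).2
  have einj : ∀ {k l : Fin 5}, k ≠ l → e k ≠ e l := by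
    intro k l hkl h
    exact hkl (g.toEquiv.injective (Subtype.ext h))
  have eadj : ∀ k, G.Adj (e k) (e (k + 1)) := fun k => g.map_adj_iff.mpr (cyc_adj13 k)
  have enadj : ∀ k, ¬ G.Adj (e k) (e (k + 2)) := fun k h => cyc_nadj13 k (g.map_adj_iff.mp h)
  have addne : ∀ (k c : Fin 5), c ≠ 0 → k + c ≠ k := by
    intro k c hc h
    exact hc (add_left_cancel (h.trans (add_zero k).symm))
  have hch : ∀ k : Fin 5, ∃ a, e k ∈ A a := fun k => hD5 _ (he k)
  set σ : Fin 5 → Fin 5 := fun k => (hch k).choose with hσ_def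
  have hσ : ∀ k, e k ∈ A (σ k) := fun k => (hch k).choose_spec
  have idx2 : ∀ k : Fin 5, k + 1 + 1 = k + 2 := by
    intro k; rw [add_assoc, show (1 : Fin 5) + 1 = 2 by decide]
  have eadj' : ∀ k, G.Adj (e (k + 1)) (e (k + 2))  := by
    intro k; have h := eadj (k + 1); rwa [idx2 k] at h
  have step1 : ∀ k : Fin 5, σ (k + 1) = σ k + 1 ∨ σ (k + 1) = σ k + 4 := by
    intro k
    obtain ⟨m, hm⟩ : ∃ m : Fin 5, σ (k + 1) = σ k + m := ⟨σ (k + 1) - σ k, (add_sub_cancel _ _).symm⟩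
    rcases fin5cases m with rfl | rfl | rfl | rfl | rfl
    · exfalso
      rw [add_zero] at hm
      obtain ⟨m2, hm2⟩ : ∃ m2 : Fin 5, σ (k + 2) = σ (k + 1) + m2 :=
        ⟨σ (k + 2) - σ (k + 1), (add_sub_cancel _ _).symm⟩
      have hken : k ≠ k + 2 := fun h => addne k 2 (by decide) h.symm
      rcases fin5cases m2 with rfl | rfl | rfl | rfl | rfl
      · rw [add_zero, hm] at hm2
        exact enadj k (adj_of (hσ k) (hσ (k + 2)) (einj hken) (Or.inl hm2))
      · rw [hm] at hm2
        exact enadj k (adj_of (hσ k) (hσ (k + 2)) (einj hken) (Or.inr (Or.inl hm2)))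
      · exact nadj_of (hσ (k + 1)) (hσ (k + 2)) (Or.inl hm2) (eadj' k)
      · exact nadj_of (hσ (k + 1)) (hσ (k + 2)) (Or.inr hm2) (eadj' k)
      · rw [hm] at hm2
        exact enadj k (adj_of (hσ k) (hσ (k + 2)) (einj hken) (Or.inr (Or.inr hm2)))
    · exact Or.inl hm
    · exact absurd (eadj k) (nadj_of (hσ k) (hσ (k + 1)) (Or.inl hm))
    · exact absurd (eadj k) (nadj_of (hσ k) (hσ (k + 1)) (Or.inr hm))
    · exact Or.inr hm
  have step2 : ∀ k : Fin 5, σ (k + 2) = σ k + 2 ∨ σ (k + 2) = σ k + 3 := by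
    intro k
    obtain ⟨m, hm⟩ : ∃ m : Fin 5, σ (k + 2) = σ k + m := ⟨σ (k + 2) - σ k, (add_sub_cancel _ _).symm⟩
    have hken : k ≠ k + 2 := fun h => addne k 2 (by decide) h.symm
    rcases fin5cases m with rfl | rfl | rfl | rfl | rfl
    · exfalso
      rw [add_zero] at hm
      exact enadj k (adj_of (hσ k) (hσ (k + 2)) (einj hken) (Or.inl hm))
    · exact absurd (adj_of (hσ k) (hσ (k + 2)) (einj hken) (Or.inr (Or.inl hm))) (enadj k)
    · exact Or.inl hm
    · exact Or.inr hm
    · exact absurd (adj_of (hσ k) (hσ (k + 2)) (einj hken) (Or.inr (Or.inr hm))) (enadj k)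
  have S1 : σ 1 = σ 0 + 1 ∨ σ 1 = σ 0 + 4 := by
    have h := step1 0; rwa [show (0 : Fin 5) + 1 = 1 by decide] at h
  have S2 : σ 2 = σ 1 + 1 ∨ σ 2 = σ 1 + 4 := by
    have h := step1 1; rwa [show (1 : Fin 5) + 1 = 2 by decide] at h
  have S3 : σ 3 = σ 2 + 1 ∨ σ 3 = σ 2 + 4 := by
    have h := step1 2; rwa [show (2 : Fin 5) + 1 = 3 by decide] at h
  have S4 : σ 4 = σ 3 + 1 ∨ σ 4 = σ 3 + 4 := by
    have h := step1 3; rwa [show (3 : Fin 5) + 1 = 4 by decide] at h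
  have S0 : σ 0 = σ 4 + 1 ∨ σ 0 = σ 4 + 4 := by
    have h := step1 4; rwa [show (4 : Fin 5) + 1 = 0 by decide] at h
  have T2 : σ 2 = σ 0 + 2 ∨ σ 2 = σ 0 + 3 := by
    have h := step2 0; rwa [show (0 : Fin 5) + 2 = 2 by decide] at h
  have T3 : σ 3 = σ 1 + 2 ∨ σ 3 = σ 1 + 3 := by
    have h := step2 1; rwa [show (1 : Fin 5) + 2 = 3 by decide] at h
  have T4 : σ 4 = σ 2 + 2 ∨ σ 4 = σ 2 + 3 := by
    have h := step2 2; rwa [show (2 : Fin 5) + 2 = 4 by decide] at h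
  have T0 : σ 0 = σ 3 + 2 ∨ σ 0 = σ 3 + 3 := by
    have h := step2 3; rwa [show (3 : Fin 5) + 2 = 0 by decide] at h
  have T1 : σ 1 = σ 4 + 2 ∨ σ 1 = σ 4 + 3 := by
    have h := step2 4; rwa [show (4 : Fin 5) + 2 = 1 by decide] at h
  have ea0 : G.Adj (e 0) (e 1) := by
    have h := eadj 0; rwa [show (0 : Fin 5) + 1 = 1 by decide] at h
  have ea1 : G.Adj (e 1) (e 2) := by
    have h := eadj 1; rwa [show (1 : Fin 5) + 1 = 2 by decide] at h
  have ea2 : G.Adj (e 2) (e 3) := by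
    have h := eadj 2; rwa [show (2 : Fin 5) + 1 = 3 by decide] at h
  have ea3 : G.Adj (e 3) (e 4) := by
    have h := eadj 3; rwa [show (3 : Fin 5) + 1 = 4 by decide] at h
  have ea4 : G.Adj (e 4) (e 0) := by
    have h := eadj 4; rwa [show (4 : Fin 5) + 1 = 0 by decide] at h
  have en0 : ¬G.Adj (e 0) (e 2) := by
    have h := enadj 0; rwa [show (0 : Fin 5) + 2 = 2 by decide] at h
  have en1 : ¬G.Adj (e 1) (e 3) := by
    have h := enadj 1; rwa [show (1 : Fin 5) + 2 = 3 by decide] at h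
  have en2 : ¬G.Adj (e 2) (e 4) := by
    have h := enadj 2; rwa [show (2 : Fin 5) + 2 = 4 by decide] at h
  have en3 : ¬G.Adj (e 3) (e 0) := by
    have h := enadj 3; rwa [show (3 : Fin 5) + 2 = 0 by decide] at h
  have en4 : ¬G.Adj (e 4) (e 1) := by
    have h := enadj 4; rwa [show (4 : Fin 5) + 2 = 1 by decide] at h
  have une : ∀ k, u ≠ e k := fun k h => huD (h ▸ he k)
  have main : ∀ l0 l1 l2 l3 l4 : Fin 5,
      G.Adj (e l0) (e l1) → G.Adj (e l1) (e l2) → G.Adj (e l2) (e l3) →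
      G.Adj (e l3) (e l4) → G.Adj (e l4) (e l0) →
      ¬G.Adj (e l0) (e l2) → ¬G.Adj (e l1) (e l3) → ¬G.Adj (e l2) (e l4) →
      ¬G.Adj (e l3) (e l0) → ¬G.Adj (e l4) (e l1) →
      RotPat (σ l0) (σ l1) (σ l2) (σ l3) (σ l4) i → False := by
    rintro l0 l1 l2 l3 l4 a01 a12 a23 a34 a40 n02 n13 n24 n30 n41 ⟨p0, p1, p2, p3, p4⟩
    exact fan_transport13 hfan f huS (hDS (he l0)) (hDS (he l1)) (hDS (he l2))
      (hDS (he l3)) (hDS (he l4)) a01 a12 a23 a34 a40 n02 n13 n24 n30 n41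
      (adj_of hui (hσ l0) (une l0) (Or.inl p0))
      (adj_of hui (hσ l1) (une l1) (Or.inr p1))
      (adj_of hui (hσ l4) (une l4) (Or.inr p4))
      (nadj_of hui (hσ l2) p2) (nadj_of hui (hσ l3) p3)
  rcases sigma_main13 (σ 0) (σ 1) (σ 2) (σ 3) (σ 4) i S1 S2 S3 S4 S0 T2 T3 T4 T0 T1 with
    hP | hP | hP | hP | hP
  · exact main 0 1 2 3 4 ea0 ea1 ea2 ea3 ea4 en0 en1 en2 en3 en4 hP
  · exact main 1 2 3 4 0 ea1 ea2 ea3 ea4 ea0 en1 en2 en3 en4 en0 hP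
  · exact main 2 3 4 0 1 ea2 ea3 ea4 ea0 ea1 en2 en3 en4 en0 en1 hP
  · exact main 3 4 0 1 2 ea3 ea4 ea0 ea1 ea2 en3 en4 en0 en1 en2 hP
  · exact main 4 0 1 2 3 ea4 ea0 ea1 ea2 ea3 en4 en0 en1 en2 en3 hP

/-- The five lower parts as a function on `Fin 5`. -/
abbrev partA13 {V : Type*} (A1 A2 A3 A4 A5 : Set V) : Fin 5 → Set V :=
  fun k => match k.val with
  | 0 => A1
  | 1 => A2
  | 2 => A3
  | 3 => A4
  | _ => A5

end Statement13Aux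

/-- in a graph of `H*` (with `G[A₆]` being `P₄`-free), if `S` induces one
of `G₄,…,G₁₀` and `D ⊆ S` induces a `C₅` with `D ⊆ A₁ ∪ ⋯ ∪ A₅`, then every vertex of
`S∖D` with a neighbour in `D` lies in `A₆`, and all such vertices have the same
neighbourhood in `D`. -/
theorem neighbours_of_C5_in_HStar {V : Type*} (G : SimpleGraph V)
    (A1 A2 A3 A4 A5 A6 A7 : Set V) (hH : HStarPart G A1 A2 A3 A4 A5 A6 A7)
    (hP5 : IndFree P5 G) (hgem : IndFree gem G) (hA6P4 : IndFree P4 (G.induce A6))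
    (S : Set V)
    (hS : Nonempty (graphG4 ≃g G.induce S) ∨ Nonempty (graphG5 ≃g G.induce S) ∨
      Nonempty (graphG6 ≃g G.induce S) ∨ Nonempty (graphG7 ≃g G.induce S) ∨
      Nonempty (graphG8 ≃g G.induce S) ∨ Nonempty (graphG9 ≃g G.induce S) ∨
      Nonempty (graphG10 ≃g G.induce S))
    (D : Set V) (hDS : D ⊆ S) (hD : Nonempty (cycle5 ≃g G.induce D))
    (hD5 : D ⊆ A1 ∪ A2 ∪ A3 ∪ A4 ∪ A5) :
    (∀ u ∈ S \ D, (∃ d ∈ D, G.Adj u d) → u ∈ A6) ∧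
    (∀ u ∈ S \ D, ∀ v ∈ S \ D, (∃ d ∈ D, G.Adj u d) → (∃ d ∈ D, G.Adj v d) →
      ∀ d ∈ D, (G.Adj u d ↔ G.Adj v d)) := by
  obtain ⟨g⟩ := hD
  obtain ⟨n, H, hfan, ⟨f⟩⟩ :
      ∃ (n : ℕ) (H : SimpleGraph (Fin n)), NoFan H ∧ Nonempty (H ≃g G.induce S) := by
    rcases hS with hf | hf | hf | hf | hf | hf | hf
    exacts [⟨7, graphG4, nofanG4, hf⟩, ⟨8, graphG5, nofanG5, hf⟩, ⟨8, graphG6, nofanG6, hf⟩,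
      ⟨8, graphG7, nofanG7, hf⟩, ⟨8, graphG8, nofanG8, hf⟩, ⟨9, graphG9, nofanG9, hf⟩,
      ⟨9, graphG10, nofanG10, hf⟩]
  have pd := hH.pdisj
  rw [List.pairwise_cons] at pd
  obtain ⟨ha1, pd⟩ := pd
  rw [List.pairwise_cons] at pd
  obtain ⟨ha2, pd⟩ := pd
  rw [List.pairwise_cons] at pd
  obtain ⟨ha3, pd⟩ := pd
  rw [List.pairwise_cons] at pd
  obtain ⟨ha4, -⟩ := pd
  have d12 := ha1 A2 (by simp)
  have d13 := ha1 A3 (by simp)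
  have d14 := ha1 A4 (by simp)
  have d15 := ha1 A5 (by simp)
  have d23 := ha2 A3 (by simp)
  have d24 := ha2 A4 (by simp)
  have d25 := ha2 A5 (by simp)
  have d34 := ha3 A4 (by simp)
  have d35 := ha3 A5 (by simp)
  have d45 := ha4 A5 (by simp)
  have hdisjA : ∀ (x : V) (a b : Fin 5),
      x ∈ partA13 A1 A2 A3 A4 A5 a → x ∈ partA13 A1 A2 A3 A4 A5 b → a = b := by
    intro x a b hxa hxb
    rcases fin5cases a with rfl | rfl | rfl | rfl | rfl <;>
      rcases fin5cases b with rfl | rfl | rfl | rfl | rfl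
    exacts [rfl,
      (Set.disjoint_left.mp d12 hxa hxb).elim,
      (Set.disjoint_left.mp d13 hxa hxb).elim,
      (Set.disjoint_left.mp d14 hxa hxb).elim,
      (Set.disjoint_left.mp d15 hxa hxb).elim,
      (Set.disjoint_left.mp d12 hxb hxa).elim, rfl,
      (Set.disjoint_left.mp d23 hxa hxb).elim,
      (Set.disjoint_left.mp d24 hxa hxb).elim,
      (Set.disjoint_left.mp d25 hxa hxb).elim,
      (Set.disjoint_left.mp d13 hxb hxa).elim,
      (Set.disjoint_left.mp d23 hxb hxa).elim, rfl,
      (Set.disjoint_left.mp d34 hxa hxb).elim,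
      (Set.disjoint_left.mp d35 hxa hxb).elim,
      (Set.disjoint_left.mp d14 hxb hxa).elim,
      (Set.disjoint_left.mp d24 hxb hxa).elim,
      (Set.disjoint_left.mp d34 hxb hxa).elim, rfl,
      (Set.disjoint_left.mp d45 hxa hxb).elim,
      (Set.disjoint_left.mp d15 hxb hxa).elim,
      (Set.disjoint_left.mp d25 hxb hxa).elim,
      (Set.disjoint_left.mp d35 hxb hxa).elim,
      (Set.disjoint_left.mp d45 hxb hxa).elim, rfl]
  have hclqA : ∀ a : Fin 5, G.IsClique (partA13 A1 A2 A3 A4 A5 a) := by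
    intro a
    rcases fin5cases a with rfl | rfl | rfl | rfl | rfl
    exacts [hH.cl1, hH.cl2, hH.cl3, hH.cl4, hH.cl5]
  have hcomA : ∀ a : Fin 5,
      CompleteTo G (partA13 A1 A2 A3 A4 A5 a) (partA13 A1 A2 A3 A4 A5 (a + 1)) := by
    intro a
    rcases fin5cases a with rfl | rfl | rfl | rfl | rfl
    exacts [hH.c12, hH.c23, hH.c34, hH.c45, hH.c51]
  have hantA : ∀ a : Fin 5,
      AnticompleteTo G (partA13 A1 A2 A3 A4 A5 a) (partA13 A1 A2 A3 A4 A5 (a + 2)) := by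
    intro a
    rcases fin5cases a with rfl | rfl | rfl | rfl | rfl
    exacts [hH.a13, hH.a24, hH.a35,
      fun s hs t ht hadj => hH.a14 t ht s hs hadj.symm,
      fun s hs t ht hadj => hH.a25 t ht s hs hadj.symm]
  have hD5A : ∀ x ∈ D, ∃ a : Fin 5, x ∈ partA13 A1 A2 A3 A4 A5 a := by
    intro x hx
    rcases hD5 hx with ((((h | h) | h) | h) | h)
    exacts [⟨0, h⟩, ⟨1, h⟩, ⟨2, h⟩, ⟨3, h⟩, ⟨4, h⟩]
  have key : ∀ u ∈ S \ D, (∃ d ∈ D, G.Adj u d) → u ∈ A6 := by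
    rintro u ⟨huS, huD⟩ ⟨d, hdD, hud⟩
    have hu7 : u ∈ A1 ∪ A2 ∪ A3 ∪ A4 ∪ A5 ∪ A6 ∪ A7 := by rw [hH.cover]; trivial
    rcases hu7 with ((((((h | h) | h) | h) | h) | h) | h)
    · exact (inPartContra13 (partA13 A1 A2 A3 A4 A5) hdisjA hclqA hcomA hantA hfan f hDS g
        hD5A huS huD (i := 0) h).elim
    · exact (inPartContra13 (partA13 A1 A2 A3 A4 A5) hdisjA hclqA hcomA hantA hfan f hDS g
        hD5A huS huD (i := 1) h).elim
    · exact (inPartContra13 (partA13 A1 A2 A3 A4 A5) hdisjA hclqA hcomA hantA hfan f hDS g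
        hD5A huS huD (i := 2) h).elim
    · exact (inPartContra13 (partA13 A1 A2 A3 A4 A5) hdisjA hclqA hcomA hantA hfan f hDS g
        hD5A huS huD (i := 3) h).elim
    · exact (inPartContra13 (partA13 A1 A2 A3 A4 A5) hdisjA hclqA hcomA hantA hfan f hDS g
        hD5A huS huD (i := 4) h).elim
    · exact h
    · exfalso
      rcases hD5 hdD with ((((hd | hd) | hd) | hd) | hd)
      exacts [hH.a71 u h d hd hud, hH.a72 u h d hd hud, hH.a73 u h d hd hud,
        hH.a74 u h d hd hud, hH.a75 u h d hd hud]
  refine ⟨key, ?_⟩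
  rintro u hu v hv hun hvn d hd
  have hu6 := key u hu hun
  have hv6 := key v hv hvn
  rcases hD5 hd with ((((h | h) | h) | h) | h)
  · exact iff_of_true (hH.c61 u hu6 d h) (hH.c61 v hv6 d h)
  · exact iff_of_false (hH.a62 u hu6 d h) (hH.a62 v hv6 d h)
  · exact iff_of_true (hH.c63 u hu6 d h) (hH.c63 v hv6 d h)
  · exact iff_of_true (hH.c64 u hu6 d h) (hH.c64 v hv6 d h)
  · exact iff_of_false (hH.a65 u hu6 d h) (hH.a65 v hv6 d h)
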